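/- Let V be a valuation ring with value group Γ, and let Ṽ = Π_𝒰 V be the ultrapower of V with respect to an ultrafilter 𝒰 on a set U. Then the ideal q = ∩_{z∈V, z≠0} z·Ṽ is a prime ideal of Ṽ, and hence V̄ = Ṽ/q is a valuation ring extending V. -/

import Mathlib

/-!
Common definitions for formalizing "Immediate extensions of valuation rings
and ultrapowers" (D. Popescu).

In a valuation ring (or any commutative ring, via divisibility) we encode the
comparison of values: `val a < val b` iff `a ∣ b` and `¬ b ∣ a`, and
`val a = val b` iff `a ∣ b ∧ b ∣ a`.
-/

universe u v

open Filter

/-- `val a < val b`, expressed via divisibility. -/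
def ValLT {R : Type*} [CommRing R] (a b : R) : Prop := a ∣ b ∧ ¬ b ∣ a

/-- `val a = val b`, expressed via divisibility. -/
def ValEq {R : Type*} [CommRing R] (a b : R) : Prop := a ∣ b ∧ b ∣ a

/-- A sequence indexed by the ordinals `< lam` is pseudo convergent if
`val (v i - v i') < val (v i' - v i'')` for all `i < i' < i''`. -/
def IsPseudoConvergent {R : Type*} [CommRing R] {lam : Ordinal.{v}}
    (seq : Set.Iio lam → R) : Prop :=
  ∀ i i' i'' : Set.Iio lam, i < i' → i' < i'' →
    ValLT (seq i - seq i') (seq i' - seq i'')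

/-- `z` is a pseudo limit of the sequence `seq` if
`val (z - v i) < val (z - v i')` for all `i < i'`. -/
def IsPseudoLimit {R : Type*} [CommRing R] {lam : Ordinal.{v}}
    (seq : Set.Iio lam → R) (z : R) : Prop :=
  ∀ i i' : Set.Iio lam, i < i' → ValLT (z - seq i) (z - seq i')

/-- A pseudo convergent sequence is algebraic if some polynomial `f`
satisfies `val (f (v i)) < val (f (v i'))` for all large enough `i < i'`. -/
def IsAlgebraicSeq {R : Type*} [CommRing R] {lam : Ordinal.{v}}
    (seq : Set.Iio lam → R) : Prop :=
  ∃ f : Polynomial R, ∃ i₀ : Set.Iio lam, ∀ i i' : Set.Iio lam,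
    i₀ ≤ i → i < i' →
      ValLT (Polynomial.eval (seq i) f) (Polynomial.eval (seq i') f)

/-- A pseudo convergent sequence is transcendental if every polynomial `f`
satisfies `val (f (v i)) = val (f (v i'))` for all large enough `i < i'`. -/
def IsTranscendentalSeq {R : Type*} [CommRing R] {lam : Ordinal.{v}}
    (seq : Set.Iio lam → R) : Prop :=
  ∀ f : Polynomial R, ∃ i₀ : Set.Iio lam, ∀ i i' : Set.Iio lam,
    i₀ ≤ i → i < i' →
      ValEq (Polynomial.eval (seq i) f) (Polynomial.eval (seq i') f)

/-- A sequence is fundamental if for every `γ` in the value group (the positive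
part being cofinal, `γ` is represented by a nonzero element `z` of the ring)
there exist `i < i'` with `val (v i - v i') > val z`. -/
def IsFundamentalSeq {R : Type*} [CommRing R] {lam : Ordinal.{v}}
    (seq : Set.Iio lam → R) : Prop :=
  ∀ z : R, z ≠ 0 → ∃ i i' : Set.Iio lam, i < i' ∧ ValLT z (seq i - seq i')

/-- An extension of valuation rings `f : V →+* V'` is immediate if it is
injective and local and induces isomorphisms on value groups (equivalently,
as `f` is local and injective, the value group map is onto) and on residue
fields (equivalently, the residue map is onto). -/
structure IsImmediate {V V' : Type*} [CommRing V] [CommRing V'] (f : V →+* V') : Prop where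
  injective : Function.Injective f
  isLocal : ∀ a : V, IsUnit (f a) → IsUnit a
  value_surj : ∀ x : V', ∃ a : V, ValEq (f a) x
  residue_surj : ∀ x : V', ∃ a : V, ¬ IsUnit (x - f a)

/-- A valuation ring is complete (with respect to the valuation topology) iff
every fundamental pseudo convergent sequence has a (pseudo) limit. -/
def IsCompleteValRing (R : Type v) [CommRing R] : Prop :=
  ∀ lam : Ordinal.{v}, Order.IsSuccLimit lam → ∀ seq : Set.Iio lam → R,
    IsPseudoConvergent seq → IsFundamentalSeq seq → ∃ z : R, IsPseudoLimit seq z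

/-- `h : V →+* Vh` presents `Vh` as the completion of `V` (with respect to the
valuation topology): it is an immediate extension, `Vh` is complete, and `V`
is dense in `Vh`. -/
structure IsValuationCompletion {V : Type*} {Vh : Type v} [CommRing V] [CommRing Vh]
    (h : V →+* Vh) : Prop where
  immediate : IsImmediate h
  complete : IsCompleteValRing Vh
  dense : ∀ x : Vh, ∀ z : V, z ≠ 0 → ∃ a : V, ValLT (h z) (x - h a)

/-- A field extension `g : K →+* L` is separable iff `M ⊗[K] L` is reduced for
every field extension `M` of `K` (MacLane's criterion). -/
def IsSeparableFieldHom {K L : Type u} [Field K] [Field L] (g : K →+* L) : Prop :=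
  ∀ (M : Type u) [Field M] (φ : K →+* M),
    letI : Algebra K L := g.toAlgebra
    letI : Algebra K M := φ.toAlgebra
    IsReduced (TensorProduct K M L)

/-- An injective extension of domains is separable if the induced extension of
fraction fields is separable. -/
def IsSeparableDomainExt {A B : Type u} [CommRing A] [IsDomain A] [CommRing B] [IsDomain B]
    (f : A →+* B) : Prop :=
  ∃ g : FractionRing A →+* FractionRing B,
    (∀ a : A, g (algebraMap A (FractionRing A) a) = algebraMap B (FractionRing B) (f a)) ∧
    IsSeparableFieldHom g

/-- The ultrapower `Ṽ = Π_𝒰 V` of `V` with respect to the ultrafilter `𝒰` on `U`. -/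
abbrev Ultrapower (U : Type u) (𝒰 : Ultrafilter U) (V : Type u) : Type u :=
  Filter.Germ (𝒰 : Filter U) V

/-- The canonical (diagonal) embedding `V → Ṽ`. -/
noncomputable def germConstHom (U : Type u) (𝒰 : Ultrafilter U) (V : Type u) [CommRing V] :
    V →+* Ultrapower U 𝒰 V :=
  (Filter.Germ.coeRingHom (𝒰 : Filter U)).comp (Pi.constRingHom U V)

/-- The ideal `q = ⋂_{z ∈ V, z ≠ 0} z Ṽ` of the ultrapower. -/
noncomputable def sepIdeal (U : Type u) (𝒰 : Ultrafilter U) (V : Type u) [CommRing V] :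
    Ideal (Ultrapower U 𝒰 V) :=
  ⨅ z : {z : V // z ≠ 0}, Ideal.span {germConstHom U 𝒰 V z.1}

/-- The separation `V̄ = Ṽ / q` of the ultrapower. -/
abbrev SepUltrapower (U : Type u) (𝒰 : Ultrafilter U) (V : Type u) [CommRing V] : Type u :=
  Ultrapower U 𝒰 V ⧸ sepIdeal U 𝒰 V

/-- The canonical map `V → V̄`. -/
noncomputable def barConstHom (U : Type u) (𝒰 : Ultrafilter U) (V : Type u) [CommRing V] :
    V →+* SepUltrapower U 𝒰 V :=
  (Ideal.Quotient.mk (sepIdeal U 𝒰 V)).comp (germConstHom U 𝒰 V)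

/-- `𝒰` is such that any system of polynomial equations of cardinality
`≤ card U` with coefficients in the ultrapower `Ṽ` has a solution in `Ṽ`
whenever every finite subsystem has one. -/
def SaturatedUltrafilter (U : Type u) (𝒰 : Ultrafilter U) (V : Type u) [CommRing V] : Prop :=
  ∀ (I J : Type u) (g : I → MvPolynomial J (Ultrapower U 𝒰 V)),
    Cardinal.mk I ≤ Cardinal.mk U →
    (∀ s : Finset I, ∃ x : J → Ultrapower U 𝒰 V, ∀ i ∈ s, MvPolynomial.eval x (g i) = 0) →
    ∃ x : J → Ultrapower U 𝒰 V, ∀ i : I, MvPolynomial.eval x (g i) = 0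

/-- A factorization of `w : B →+* V'` through a smooth `V`-algebra `C`. -/
structure SmoothFactorization (V B V' : Type u) [CommRing V] [CommRing B] [Algebra V B]
    [CommRing V'] (f : V →+* V') (w : B →+* V') : Type (u + 1) where
  C : Type u
  [instCommRing : CommRing C]
  [instAlgebra : Algebra V C]
  smooth : Algebra.Smooth V C
  p : B →+* C
  q : C →+* V'
  hp : p.comp (algebraMap V B) = algebraMap V C
  hq : q.comp (algebraMap V C) = f
  hqp : q.comp p = w

/-- `V'` is a filtered direct limit of smooth `V`-algebras: every `V`-morphism
from a finitely presented `V`-algebra to `V'` factors through a smooth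
`V`-algebra (Lazard-style characterization of filtered colimits). -/
def IsFilteredColimitOfSmooth {V V' : Type u} [CommRing V] [CommRing V'] (f : V →+* V') : Prop :=
  ∀ (B : Type u) [CommRing B] [Algebra V B], Algebra.FinitePresentation V B →
    ∀ w : B →+* V', w.comp (algebraMap V B) = f →
      Nonempty (SmoothFactorization V B V' f w)


section AuxStmt0
variable (U : Type u) (𝒰 : Ultrafilter U) (V : Type u) [CommRing V]

lemma germConstHom_apply' (z : V) :
    germConstHom U 𝒰 V z = (↑(fun _ : U => z) : Ultrapower U 𝒰 V) := rfl

lemma mem_sepIdeal_iff (x : Ultrapower U 𝒰 V) :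
    x ∈ sepIdeal U 𝒰 V ↔ ∀ z : V, z ≠ 0 → germConstHom U 𝒰 V z ∣ x := by
  simp only [sepIdeal, Ideal.mem_iInf, Ideal.mem_span_singleton, Subtype.forall]

lemma ultrapower_eq_zero_or [IsDomain V] (x y : Ultrapower U 𝒰 V)
    (h : x * y = 0) : x = 0 ∨ y = 0 := by
  induction x using Filter.Germ.inductionOn with | _ f =>
  induction y using Filter.Germ.inductionOn with | _ g =>
  rw [← Filter.Germ.coe_mul] at h
  have h0 : ((fun u => f u * g u) : U → V) =ᶠ[(𝒰 : Filter U)] 0 :=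
    Filter.Germ.coe_eq.mp h
  have : ∀ᶠ u in (𝒰 : Filter U), f u = 0 ∨ g u = 0 := by
    filter_upwards [h0] with u hu
    exact mul_eq_zero.mp hu
  rcases (Ultrafilter.eventually_or (f := 𝒰)).mp this with h1 | h1
  · left; exact Filter.Germ.coe_eq.mpr h1
  · right; exact Filter.Germ.coe_eq.mpr h1

lemma ultrapower_div_total [IsDomain V] [ValuationRing V] (x y : Ultrapower U 𝒰 V) :
    ∃ c : Ultrapower U 𝒰 V, x * c = y ∨ y * c = x := by
  induction x using Filter.Germ.inductionOn with | _ f =>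
  induction y using Filter.Germ.inductionOn with | _ g =>
  have key : ∀ᶠ u in (𝒰 : Filter U),
      (∃ c, f u * c = g u) ∨ (∃ c, g u * c = f u) := by
    apply Filter.Eventually.of_forall
    intro u
    rcases ValuationRing.cond (f u) (g u) with ⟨c, hc | hc⟩
    · exact Or.inl ⟨c, hc⟩
    · exact Or.inr ⟨c, hc⟩
  rcases (Ultrafilter.eventually_or (f := 𝒰)).mp key with h1 | h1
  · classical
    refine ⟨(↑(fun u => if h : ∃ c, f u * c = g u then h.choose else 0) : Ultrapower U 𝒰 V), Or.inl ?_⟩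
    rw [← Filter.Germ.coe_mul]
    apply Filter.Germ.coe_eq.mpr
    filter_upwards [h1] with u hu
    simp only [Pi.mul_apply, dif_pos hu]
    exact hu.choose_spec
  · classical
    refine ⟨(↑(fun u => if h : ∃ c, g u * c = f u then h.choose else 0) : Ultrapower U 𝒰 V), Or.inr ?_⟩
    rw [← Filter.Germ.coe_mul]
    apply Filter.Germ.coe_eq.mpr
    filter_upwards [h1] with u hu
    simp only [Pi.mul_apply, dif_pos hu]
    exact hu.choose_spec

lemma const_isUnit_of_dvd_one (m : V) (h : IsUnit (germConstHom U 𝒰 V m)) : IsUnit m := by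
  rcases h.exists_right_inv with ⟨s, hs⟩
  induction s using Filter.Germ.inductionOn with | _ g =>
  rw [germConstHom_apply', ← Filter.Germ.coe_mul, ← Filter.Germ.coe_one] at hs
  rcases (Filter.Germ.coe_eq.mp hs).exists with ⟨u, hu⟩
  exact IsUnit.of_mul_eq_one (g u) hu

lemma germConstHom_injective : Function.Injective (germConstHom U 𝒰 V) := by
  intro a b hab
  rw [germConstHom_apply', germConstHom_apply'] at hab
  rcases (Filter.Germ.coe_eq.mp hab).exists with ⟨u, hu⟩
  exact hu

end AuxStmt0

/-- The ideal `q = ⋂_{z ∈ V, z ≠ 0} z Ṽ` of the ultrapower `Ṽ` is a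
prime ideal, and hence `V̄ = Ṽ/q` is a valuation ring extending `V`.
(As in the paper, the valuation of `V` is assumed to be nontrivial, i.e. `V`
is not a field; otherwise `q` is the unit ideal.) -/
theorem stmt_0 (U : Type u) (𝒰 : Ultrafilter U) (V : Type u)
    [CommRing V] [IsDomain V] [ValuationRing V] (hV : ¬ IsField V) :
    (sepIdeal U 𝒰 V).IsPrime ∧
    (∀ a b : SepUltrapower U 𝒰 V, ∃ c : SepUltrapower U 𝒰 V, a * c = b ∨ b * c = a) ∧
    Function.Injective (barConstHom U 𝒰 V) := by
  obtain ⟨m, hm0, hm⟩ : ∃ m : V, m ≠ 0 ∧ ¬ IsUnit m := by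
    by_contra h
    push_neg at h
    exact hV ⟨exists_pair_ne V, mul_comm, fun {a} ha => (h a ha).exists_right_inv⟩
  set φ := germConstHom U 𝒰 V with hφ
  have hprime : (sepIdeal U 𝒰 V).IsPrime := by
    constructor
    · intro htop
      have h1 : (1 : Ultrapower U 𝒰 V) ∈ sepIdeal U 𝒰 V := htop ▸ Submodule.mem_top
      have := (mem_sepIdeal_iff U 𝒰 V 1).mp h1 m hm0
      exact hm (const_isUnit_of_dvd_one U 𝒰 V m (isUnit_of_dvd_one this))
    · intro x y hxy
      by_cases hx : x ∈ sepIdeal U 𝒰 V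
      · exact Or.inl hx
      right
      rw [mem_sepIdeal_iff] at hx
      push_neg at hx
      obtain ⟨z₀, hz₀0, hz₀⟩ := hx
      obtain ⟨t, ht⟩ : ∃ t, x * t = φ z₀ := by
        rcases ultrapower_div_total U 𝒰 V x (φ z₀) with ⟨c, hc | hc⟩
        · exact ⟨c, hc⟩
        · exact absurd ⟨c, hc.symm⟩ hz₀
      have hxne : x ≠ 0 := by
        rintro rfl
        exact hz₀ (dvd_zero _)
      rw [mem_sepIdeal_iff] at hxy ⊢
      intro z hz
      obtain ⟨s, hs⟩ := hxy (z * z₀) (mul_ne_zero hz hz₀0)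
      refine ⟨t * s, ?_⟩
      have : x * y = x * (φ z * (t * s)) := by
        rw [hs, map_mul]
        ring_nf
        rw [← ht]
        ring
      rcases ultrapower_eq_zero_or U 𝒰 V x (y - φ z * (t * s)) (by rw [mul_sub, this]; ring) with h | h
      · exact absurd h hxne
      · rw [← hφ]
        linear_combination (norm := ring_nf) h
  refine ⟨hprime, ?_, ?_⟩
  · intro a b
    obtain ⟨x, rfl⟩ := Ideal.Quotient.mk_surjective a
    obtain ⟨y, rfl⟩ := Ideal.Quotient.mk_surjective b
    rcases ultrapower_div_total U 𝒰 V x y with ⟨c, hc | hc⟩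
    · exact ⟨Ideal.Quotient.mk _ c, Or.inl (by rw [← map_mul, hc])⟩
    · exact ⟨Ideal.Quotient.mk _ c, Or.inr (by rw [← map_mul, hc])⟩
  · intro a b hab
    by_contra hne
    have hc0 : a - b ≠ 0 := sub_ne_zero.mpr hne
    have hmem : φ (a - b) ∈ sepIdeal U 𝒰 V := by
      rw [← Ideal.Quotient.eq_zero_iff_mem]
      simp only [barConstHom, RingHom.comp_apply] at hab
      rw [map_sub, map_sub, hab, sub_self]
    obtain ⟨s, hs⟩ := (mem_sepIdeal_iff U 𝒰 V _).mp hmem ((a - b) * m) (mul_ne_zero hc0 hm0)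
    have : φ (a - b) * (1 - φ m * s) = 0 := by
      rw [map_mul, ← hφ] at hs
      linear_combination hs
    rcases ultrapower_eq_zero_or U 𝒰 V _ _ this with h | h
    · have : (a - b) = 0 := by
        apply germConstHom_injective U 𝒰 V
        rw [h, map_zero]
      exact hc0 this
    · have : φ m * s = 1 := by linear_combination -h
      exact hm (const_isUnit_of_dvd_one U 𝒰 V m (IsUnit.of_mul_eq_one s this))
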